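/- Under the bounds c1^{−1} ≤ f0 ≤ c1, c2^{−1} ≤ g0 ≤ c2 on [0,1]^d, with p0(δ,t) = p(t;δ)g0(t) the density of the multivariate current status observation, for 0 < σ ≤ c1 c2 one has ∑_{δ ∈ {0,1}^d} ∫_{[0,1]^d} (1/p0(δ,t)) 1{p0(δ,t) > σ} dt ≤ (2^d c1 c2 / d!) (log(c1 c2/σ))^d. -/

import Mathlib

open MeasureTheory

/-- The orthant probability `p(t;δ)` for a density `f0` on `[0,1]^d`. -/
noncomputable def orthProb (d : ℕ) (f0 : (Fin d → ℝ) → ℝ) (δ : Fin d → Bool)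
    (t : Fin d → ℝ) : ℝ :=
  ∫ y in {y : Fin d → ℝ | (∀ j, y j ∈ Set.Icc (0:ℝ) 1) ∧
      ∀ j, if δ j then y j ≤ t j else t j < y j}, f0 y


namespace MassQ

noncomputable def Jf (n : ℕ) (b : ℝ) (t : Fin n → ℝ) : ℝ :=
  if (∀ j, t j ∈ Set.Icc (0:ℝ) 1) ∧ b < ∏ j, t j then (∏ j, t j)⁻¹ else 0

lemma Jf_nonneg (n : ℕ) (b : ℝ) (t : Fin n → ℝ) : 0 ≤ Jf n b t := by
  unfold Jf; split
  · rename_i h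
    exact inv_nonneg.2 (Finset.prod_nonneg fun j _ => (h.1 j).1)
  · exact le_refl 0

lemma measurable_Jf (n : ℕ) (b : ℝ) : Measurable (Jf n b) := by
  have h : Jf n b = Set.indicator
      {t : Fin n → ℝ | (∀ j, t j ∈ Set.Icc (0:ℝ) 1) ∧ b < ∏ j, t j}
      (fun t => (∏ j, t j)⁻¹) := by
    ext t; simp only [Jf, Set.indicator_apply, Set.mem_setOf_eq]
  rw [h]
  have hprod : Measurable fun t : Fin n → ℝ => ∏ j, t j :=
    Finset.measurable_prod _ fun j _ => measurable_pi_apply j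
  refine Measurable.indicator hprod.inv (MeasurableSet.inter ?_ ?_)
  · show MeasurableSet {t : Fin n → ℝ | ∀ j, t j ∈ Set.Icc (0:ℝ) 1}
    have : {t : Fin n → ℝ | ∀ j, t j ∈ Set.Icc (0:ℝ) 1}
        = ⋂ j, (fun t : Fin n → ℝ => t j) ⁻¹' Set.Icc (0:ℝ) 1 := by
      ext t; simp
    rw [this]
    exact MeasurableSet.iInter fun j => (measurable_pi_apply j) measurableSet_Icc
  · exact measurableSet_lt measurable_const hprod

lemma volume_cube (n : ℕ) :
    volume (Set.univ.pi fun _ : Fin n => Set.Icc (0:ℝ) 1) = 1 := by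
  rw [volume_pi_pi]
  simp [Real.volume_Icc]

lemma Jf_le (n : ℕ) {b : ℝ} (hb : 0 < b) (t : Fin n → ℝ) :
    ‖Jf n b t‖ ≤ (Set.univ.pi fun _ : Fin n => Set.Icc (0:ℝ) 1).indicator
      (fun _ => b⁻¹) t := by
  rw [Real.norm_eq_abs, abs_of_nonneg (Jf_nonneg n b t)]
  unfold Jf; split
  · rename_i h
    have ht : t ∈ Set.univ.pi fun _ : Fin n => Set.Icc (0:ℝ) 1 := by
      intro j _; exact h.1 j
    rw [Set.indicator_of_mem ht]
    exact inv_anti₀ hb h.2.le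
  · exact Set.indicator_nonneg (fun _ _ => inv_nonneg.2 hb.le) t

lemma integrable_Jf (n : ℕ) {b : ℝ} (hb : 0 < b) : Integrable (Jf n b) := by
  have hcube : MeasurableSet (Set.univ.pi fun _ : Fin n => Set.Icc (0:ℝ) 1) :=
    MeasurableSet.univ_pi fun _ => measurableSet_Icc
  refine Integrable.mono' ?_ (measurable_Jf n b).aestronglyMeasurable
    (Filter.Eventually.of_forall (Jf_le n hb))
  rw [integrable_indicator_iff hcube]
  exact integrableOn_const (by rw [volume_cube]; exact ENNReal.one_ne_top)

noncomputable def J (n : ℕ) (b : ℝ) : ℝ := ∫ t : Fin n → ℝ, Jf n b t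

lemma J_nonneg (n : ℕ) (b : ℝ) : 0 ≤ J n b :=
  integral_nonneg (Jf_nonneg n b)

lemma Jf_eq_zero (n : ℕ) {b : ℝ} (hb : 1 ≤ b) (t : Fin n → ℝ) : Jf n b t = 0 := by
  unfold Jf; split
  · rename_i h
    exact absurd h.2 (not_lt.2 ((Finset.prod_le_one (fun j _ => (h.1 j).1)
      (fun j _ => (h.1 j).2)).trans hb))
  · rfl

lemma J_eq_zero (n : ℕ) {b : ℝ} (hb : 1 ≤ b) : J n b = 0 := by
  have : Jf n b = fun _ => 0 := funext (Jf_eq_zero n hb)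
  rw [J, this, integral_zero]


lemma ftc_log_pow (n : ℕ) {b : ℝ} (hb : 0 < b) (hb1 : b ≤ 1) :
    ∫ x in b..1, (n + 1 : ℝ) * (Real.log x - Real.log b) ^ n * x⁻¹
      = (Real.log b⁻¹) ^ (n + 1) := by
  have hderiv : ∀ x ∈ Set.uIcc b 1,
      HasDerivAt (fun x => (Real.log x - Real.log b) ^ (n + 1))
        ((n + 1 : ℝ) * (Real.log x - Real.log b) ^ n * x⁻¹) x := by
    intro x hx
    rw [Set.uIcc_of_le hb1] at hx
    have hx0 : x ≠ 0 := ne_of_gt (lt_of_lt_of_le hb hx.1)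
    have h1 : HasDerivAt (fun x => Real.log x - Real.log b) x⁻¹ x :=
      (Real.hasDerivAt_log hx0).sub_const _
    have := h1.fun_pow (n + 1)
    simpa [mul_comm, mul_assoc, mul_left_comm] using this
  have hcont : ContinuousOn
      (fun x => (n + 1 : ℝ) * (Real.log x - Real.log b) ^ n * x⁻¹) (Set.uIcc b 1) := by
    rw [Set.uIcc_of_le hb1]
    have h0 : ∀ x ∈ Set.Icc b 1, x ≠ 0 := fun x hx => ne_of_gt (lt_of_lt_of_le hb hx.1)
    exact (continuousOn_const.mul
      (((Real.continuousOn_log.mono (by intro x hx; simpa using h0 x hx)).sub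
        continuousOn_const).pow n)).mul (continuousOn_id.inv₀ h0)
  rw [intervalIntegral.integral_eq_sub_of_hasDerivAt hderiv
    (hcont.intervalIntegrable)]
  rw [Real.log_one, Real.log_inv]
  ring_nf

lemma J_le : ∀ (n : ℕ) {b : ℝ}, 0 < b →
    J n b ≤ (max (Real.log b⁻¹) 0) ^ n / n.factorial := by
  intro n
  induction n with
  | zero =>
    intro b hb
    have hvol : (volume : Measure (Fin 0 → ℝ)) Set.univ = 1 := by
      rw [← Set.pi_univ (Set.univ : Set (Fin 0)), volume_pi_pi]
      simp
    have hprob : IsProbabilityMeasure (volume : Measure (Fin 0 → ℝ)) := ⟨hvol⟩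
    have hle : ∀ t : Fin 0 → ℝ, Jf 0 b t ≤ 1 := by
      intro t
      unfold Jf
      split
      · simp
      · norm_num
    calc J 0 b ≤ ∫ _t : Fin 0 → ℝ, (1 : ℝ) :=
          integral_mono (integrable_Jf 0 hb) (integrable_const 1) hle
      _ = 1 := by simp
      _ ≤ _ := by simp [Nat.factorial]
  | succ n ih =>
    intro b hb
    rcases le_or_gt 1 b with h1b | hb1
    · rw [J_eq_zero _ h1b]
      positivity
    -- main case: 0 < b < 1
    have hL0 : 0 ≤ Real.log b⁻¹ := Real.log_nonneg ((one_le_inv₀ hb).2 hb1.le)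
    have hmax : max (Real.log b⁻¹) 0 = Real.log b⁻¹ := max_eq_left hL0
    set e := MeasurableEquiv.piFinSuccAbove (fun _ : Fin (n+1) => ℝ) 0 with he
    have hmp : MeasurePreserving e.symm volume volume :=
      (volume_preserving_piFinSuccAbove (fun _ : Fin (n+1) => ℝ) 0).symm
    set g : ℝ × (Fin n → ℝ) → ℝ := fun p => Jf (n+1) b (e.symm p) with hg
    have hgint : Integrable g := by
      rw [hg]
      exact (hmp.integrable_comp_emb e.symm.measurableEmbedding).2 (integrable_Jf _ hb)
    -- pointwise description of g
    have hgeq : ∀ x (u : Fin n → ℝ), g (x, u)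
        = (Set.Ioc (0:ℝ) 1).indicator (fun x => x⁻¹ * Jf n (b / x) u) x := by
      intro x u
      have hsymm : e.symm (x, u) = Fin.cons x u := by
        simp [he, MeasurableEquiv.piFinSuccAbove, Fin.consEquiv]
      rw [hg]
      simp only [hsymm]
      have hprod : ∏ j, (Fin.cons x u : Fin (n+1) → ℝ) j = x * ∏ j, u j := by
        simp [Fin.prod_univ_succ]
      by_cases hx : x ∈ Set.Ioc (0:ℝ) 1
      · rw [Set.indicator_of_mem hx]
        unfold Jf
        have hforall : (∀ j, (Fin.cons x u : Fin (n+1) → ℝ) j ∈ Set.Icc (0:ℝ) 1)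
            ↔ (x ∈ Set.Icc (0:ℝ) 1 ∧ ∀ j, u j ∈ Set.Icc (0:ℝ) 1) := by
          rw [Fin.forall_fin_succ]
          simp
        rw [hprod]
        have hxm : x ∈ Set.Icc (0:ℝ) 1 := ⟨hx.1.le, hx.2⟩
        have hlt : b < x * ∏ j, u j ↔ b / x < ∏ j, u j := by
          rw [div_lt_iff₀ hx.1, mul_comm]
        simp only [hforall, hxm, true_and, hlt, mul_ite, mul_zero, mul_inv]
      · rw [Set.indicator_of_notMem hx]
        unfold Jf
        rw [if_neg]
        rintro ⟨hcond, hblt⟩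
        have hx0m : x ∈ Set.Icc (0:ℝ) 1 := by simpa using hcond 0
        rcases (lt_or_ge 0 x) with hx0 | hx0
        · exact hx ⟨hx0, hx0m.2⟩
        · have hx0' : x = 0 := le_antisymm hx0 hx0m.1
          rw [hprod, hx0', zero_mul] at hblt
          exact absurd hblt (not_lt.2 hb.le)
    -- Fubini
    have hJrw : J (n+1) b = ∫ x : ℝ, ∫ u : Fin n → ℝ, g (x, u) := by
      rw [J, ← hmp.integral_comp e.symm.measurableEmbedding (Jf (n+1) b)]
      exact integral_prod g hgint
    set inner : ℝ → ℝ := fun x => ∫ u : Fin n → ℝ, g (x, u) with hinner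
    have hinner_int : Integrable inner := hgint.integral_prod_left
    set B : ℝ → ℝ := (Set.Ioc b 1).indicator
      (fun x => x⁻¹ * ((Real.log (x / b)) ^ n / n.factorial)) with hB
    have h_inner_le : ∀ x, inner x ≤ B x := by
      intro x
      by_cases hx : x ∈ Set.Ioc (0:ℝ) 1
      · have hxinv : (0:ℝ) ≤ x⁻¹ := inv_nonneg.2 hx.1.le
        have hinval : inner x = x⁻¹ * J n (b / x) := by
          rw [hinner]
          simp only [hgeq, Set.indicator_of_mem hx]
          rw [J, integral_const_mul]
        rcases le_or_gt x b with hxb | hbx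
        · have h1 : (1:ℝ) ≤ b / x := (one_le_div hx.1).2 hxb
          have hBx : B x = 0 := by
            rw [hB, Set.indicator_of_notMem (by simp [hxb])]
          rw [hinval, J_eq_zero n h1, mul_zero, hBx]
        · have hxm : x ∈ Set.Ioc b 1 := ⟨hbx, hx.2⟩
          have hBx : B x = x⁻¹ * ((Real.log (x / b)) ^ n / n.factorial) := by
            rw [hB, Set.indicator_of_mem hxm]
          have hbx0 : 0 < b / x := div_pos hb hx.1
          have hih := ih hbx0
          have hinvv : (b / x)⁻¹ = x / b := by
            rw [inv_div]
          have hxb1 : 1 ≤ x / b := (one_le_div hb).2 hbx.le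
          have hlog0 : 0 ≤ Real.log (x / b) := Real.log_nonneg hxb1
          have hmax' : max (Real.log (b / x)⁻¹) 0 = Real.log (x / b) := by
            rw [hinvv]; exact max_eq_left hlog0
          rw [hinval, hBx]
          apply mul_le_mul_of_nonneg_left _ hxinv
          rw [hmax'] at hih
          exact hih
      · have hinval : inner x = 0 := by
          rw [hinner]
          simp only [hgeq, Set.indicator_of_notMem hx]
          exact integral_zero _ _
        have hBx : B x = 0 := by
          rw [hB, Set.indicator_of_notMem]
          intro hmem
          exact hx ⟨lt_trans hb hmem.1, hmem.2⟩
        rw [hinval, hBx]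
    have hB_int : Integrable B := by
      rw [hB, integrable_indicator_iff measurableSet_Ioc]
      refine (ContinuousOn.integrableOn_Icc ?_).mono_set Set.Ioc_subset_Icc_self
      have h0 : ∀ x ∈ Set.Icc b 1, x ≠ 0 := fun x hx => ne_of_gt (lt_of_lt_of_le hb hx.1)
      refine ContinuousOn.mul (continuousOn_id.inv₀ h0) (ContinuousOn.div_const ?_ _)
      refine ContinuousOn.pow ?_ n
      refine ContinuousOn.comp Real.continuousOn_log (continuousOn_id.div_const b) ?_
      intro x hx
      simp only [Set.mem_compl_iff, Set.mem_singleton_iff]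
      exact ne_of_gt (div_pos (lt_of_lt_of_le hb hx.1) hb)
    have hfac : ((n:ℝ) + 1) * n.factorial ≠ 0 := by positivity
    calc J (n+1) b = ∫ x, inner x := hJrw
      _ ≤ ∫ x, B x := integral_mono hinner_int hB_int h_inner_le
      _ = ∫ x in Set.Ioc b 1, x⁻¹ * ((Real.log (x / b)) ^ n / n.factorial) := by
          rw [hB, integral_indicator measurableSet_Ioc]
      _ = ∫ x in b..1, x⁻¹ * ((Real.log (x / b)) ^ n / n.factorial) :=
          (intervalIntegral.integral_of_le hb1.le).symm
      _ = (((n:ℝ) + 1) * n.factorial)⁻¹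
          * ∫ x in b..1, ((n:ℝ) + 1) * (Real.log x - Real.log b) ^ n * x⁻¹ := by
          rw [← intervalIntegral.integral_const_mul]
          apply intervalIntegral.integral_congr
          intro x hx
          rw [Set.uIcc_of_le hb1.le] at hx
          have hx0 : x ≠ 0 := ne_of_gt (lt_of_lt_of_le hb hx.1)
          dsimp only
          rw [Real.log_div hx0 (ne_of_gt hb)]
          field_simp
      _ = (((n:ℝ) + 1) * n.factorial)⁻¹ * (Real.log b⁻¹) ^ (n + 1) := by
          rw [ftc_log_pow n hb hb1.le]
      _ = (max (Real.log b⁻¹) 0) ^ (n + 1) / (n + 1).factorial := by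
          rw [hmax, Nat.factorial_succ]
          push_cast
          rw [eq_div_iff (by positivity)]
          field_simp



lemma measurable_orthProb (d : ℕ) (f0 : (Fin d → ℝ) → ℝ) (hf0 : Measurable f0)
    (δ : Fin d → Bool) : Measurable fun t => orthProb d f0 δ t := by
  classical
  set T : Set ((Fin d → ℝ) × (Fin d → ℝ)) :=
    {p | (∀ j, p.2 j ∈ Set.Icc (0:ℝ) 1) ∧
      ∀ j, if δ j then p.2 j ≤ p.1 j else p.1 j < p.2 j} with hT
  have hTm : MeasurableSet T := by
    rw [hT, Set.setOf_and]
    apply MeasurableSet.inter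
    · rw [Set.setOf_forall]
      exact MeasurableSet.iInter fun j =>
        ((measurable_pi_apply j).comp measurable_snd) measurableSet_Icc
    · rw [Set.setOf_forall]
      refine MeasurableSet.iInter fun j => ?_
      cases hj : δ j
      · simp only [hj, Bool.false_eq_true, if_false]
        exact measurableSet_lt (by fun_prop) (by fun_prop)
      · simp only [hj, if_true]
        exact measurableSet_le (by fun_prop) (by fun_prop)
  have hSm : ∀ t : Fin d → ℝ, MeasurableSet {y : Fin d → ℝ |
      (∀ j, y j ∈ Set.Icc (0:ℝ) 1) ∧ ∀ j, if δ j then y j ≤ t j else t j < y j} := by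
    intro t
    rw [Set.setOf_and]
    apply MeasurableSet.inter
    · rw [Set.setOf_forall]
      exact MeasurableSet.iInter fun j => (measurable_pi_apply j) measurableSet_Icc
    · rw [Set.setOf_forall]
      refine MeasurableSet.iInter fun j => ?_
      cases hj : δ j
      · simp only [hj, Bool.false_eq_true, if_false]
        exact measurableSet_lt measurable_const (measurable_pi_apply j)
      · simp only [hj, if_true]
        exact measurableSet_le (measurable_pi_apply j) measurable_const
  have key : ∀ t, orthProb d f0 δ t = ∫ y, T.indicator (fun p => f0 p.2) (t, y) := by
    intro t
    rw [orthProb, ← integral_indicator (hSm t)]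
    congr 1
  have hk : Measurable (T.indicator fun p : (Fin d → ℝ) × (Fin d → ℝ) => f0 p.2) :=
    (hf0.comp measurable_snd).indicator hTm
  simp only [key]
  have hsm : StronglyMeasurable fun t => ∫ y, T.indicator (fun p => f0 p.2) (t, y) := by
    apply StronglyMeasurable.integral_prod_right
      (f := fun t y => T.indicator (fun p => f0 p.2) (t, y))
    exact hk.stronglyMeasurable
  exact hsm.measurable

lemma per_delta (d : ℕ) (c1 c2 : ℝ) (hc1 : 0 < c1) (hc2 : 0 < c2)
    (f0 g0 : (Fin d → ℝ) → ℝ) (hf0 : Measurable f0) (hg0 : Measurable g0)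
    (hf : ∀ y ∈ Set.univ.pi fun _ : Fin d => Set.Icc (0:ℝ) 1, c1⁻¹ ≤ f0 y ∧ f0 y ≤ c1)
    (hg : ∀ y ∈ Set.univ.pi fun _ : Fin d => Set.Icc (0:ℝ) 1, c2⁻¹ ≤ g0 y ∧ g0 y ≤ c2)
    (σ : ℝ) (hσ : 0 < σ) (hσ' : σ ≤ c1 * c2) (δ : Fin d → Bool) :
    ∫ t in Set.univ.pi fun _ : Fin d => Set.Icc (0:ℝ) 1,
        (if σ < orthProb d f0 δ t * g0 t then (orthProb d f0 δ t * g0 t)⁻¹ else 0)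
      ≤ c1 * c2 * J d (σ / (c1 * c2)) := by
  classical
  have hc12 : 0 < c1 * c2 := mul_pos hc1 hc2
  set b : ℝ := σ / (c1 * c2) with hbdef
  have hb : 0 < b := div_pos hσ hc12
  set cube := Set.univ.pi fun _ : Fin d => Set.Icc (0:ℝ) 1 with hcube
  have hcubem : MeasurableSet cube :=
    MeasurableSet.univ_pi fun _ => measurableSet_Icc
  set ψ : (Fin d → ℝ) → (Fin d → ℝ) := fun t j => if δ j then t j else 1 - t j with hψ
  have hψinv : ∀ t, ψ (ψ t) = t := by
    intro t; funext j; by_cases hj : δ j <;> simp [hψ, hj]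
  have hψm : Measurable ψ := by
    refine measurable_pi_iff.2 fun j => ?_
    by_cases hj : δ j
    · simp only [hψ, if_pos hj]
      exact measurable_pi_apply j
    · simp only [hψ, if_neg hj]
      exact measurable_const.sub (measurable_pi_apply j)
  set ψe : (Fin d → ℝ) ≃ᵐ (Fin d → ℝ) :=
    ⟨⟨ψ, ψ, hψinv, hψinv⟩, hψm, hψm⟩ with hψe
  have hψmp : MeasurePreserving ψ volume volume := by
    have h : ∀ j : Fin d, MeasurePreserving
        (fun x : ℝ => if δ j then x else 1 - x) volume volume := by
      intro j
      by_cases hj : δ j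
      · have e : (fun x : ℝ => if δ j then x else 1 - x) = id := by funext x; simp [hj]
        rw [e]; exact MeasurePreserving.id _
      · simpa [hj] using Measure.measurePreserving_sub_left (volume : Measure ℝ) 1
    exact volume_preserving_pi h
  set p0 : (Fin d → ℝ) → ℝ := fun t => orthProb d f0 δ t * g0 t with hp0
  set q : (Fin d → ℝ) → ℝ := fun t => if σ < p0 t then (p0 t)⁻¹ else 0 with hq
  -- pointwise bound
  have hpt : ∀ t ∈ cube, q t ≤ c1 * c2 * Jf d b (ψ t) := by
    intro t htc
    have ht : ∀ j, t j ∈ Set.Icc (0:ℝ) 1 := fun j => htc j (Set.mem_univ j)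
    have hw : ∀ j, ψ t j ∈ Set.Icc (0:ℝ) 1 := by
      intro j
      by_cases hj : δ j
      · simp only [hψ, if_pos hj]
        exact ht j
      · simp only [hψ, if_neg hj]
        constructor
        · linarith [(ht j).2]
        · linarith [(ht j).1]
    set P : ℝ := ∏ j, ψ t j with hP
    have hPnn : 0 ≤ P := Finset.prod_nonneg fun j _ => (hw j).1
    set S : Set (Fin d → ℝ) := Set.univ.pi
      (fun j => if δ j then Set.Icc 0 (t j) else Set.Ioc (t j) 1) with hS
    have hSm : MeasurableSet S := by
      refine MeasurableSet.univ_pi fun j => ?_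
      by_cases hj : δ j <;> simp only [hj, if_true, if_false]
      · exact measurableSet_Icc
      · exact measurableSet_Ioc
    have hSeq : {y : Fin d → ℝ | (∀ j, y j ∈ Set.Icc (0:ℝ) 1) ∧
        ∀ j, if δ j then y j ≤ t j else t j < y j} = S := by
      ext y
      simp only [Set.mem_setOf_eq, hS, Set.mem_univ_pi]
      constructor
      · rintro ⟨h1, h2⟩ j
        have h1j := h1 j
        have h2j := h2 j
        by_cases hj : δ j <;> simp only [hj, if_true, if_false] at h2j ⊢
        · exact ⟨h1j.1, h2j⟩
        · exact ⟨h2j, h1j.2⟩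
      · intro h
        constructor <;> intro j <;> have hjm := h j <;>
          by_cases hj : δ j <;> simp only [hj, if_true, if_false] at hjm ⊢
        · exact ⟨hjm.1, le_trans hjm.2 (ht j).2⟩
        · exact ⟨le_trans (ht j).1 hjm.1.le, hjm.2⟩
        · exact hjm.2
        · exact hjm.1
    have hSsub : S ⊆ cube := by
      intro y hy j _
      have hjm := hy j (Set.mem_univ j)
      by_cases hj : δ j <;> simp only [hj, if_true, if_false] at hjm
      · exact ⟨hjm.1, le_trans hjm.2 (ht j).2⟩
      · exact ⟨le_trans (ht j).1 hjm.1.le, hjm.2⟩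
    have hSfin : volume S ≠ ⊤ := by
      refine ne_top_of_le_ne_top ?_ (measure_mono hSsub)
      rw [hcube, volume_cube]
      exact ENNReal.one_ne_top
    have hvolS : (volume S).toReal = P := by
      rw [hS, volume_pi_pi]
      have hco : ∀ j : Fin d,
          volume (if δ j then Set.Icc 0 (t j) else Set.Ioc (t j) 1)
            = ENNReal.ofReal (ψ t j) := by
        intro j
        by_cases hj : δ j <;>
          simp [hψ, hj, Real.volume_Icc, Real.volume_Ioc]
      rw [Finset.prod_congr rfl fun j _ => hco j]
      rw [← ENNReal.ofReal_prod_of_nonneg fun j _ => (hw j).1]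
      rw [ENNReal.toReal_ofReal hPnn]
    have hIf0 : IntegrableOn f0 S := by
      refine Measure.integrableOn_of_bounded (M := c1) hSfin
        hf0.aestronglyMeasurable ?_
      rw [ae_restrict_iff' hSm]
      refine Filter.Eventually.of_forall fun y hy => ?_
      have hfy := hf y (hSsub hy)
      rw [Real.norm_eq_abs, abs_le]
      constructor
      · have : (0:ℝ) ≤ c1⁻¹ := inv_nonneg.2 hc1.le
        linarith [hfy.1]
      · exact hfy.2
    have horth : orthProb d f0 δ t = ∫ y in S, f0 y := by
      rw [orthProb, hSeq]
    have hIc : IntegrableOn (fun _ : Fin d → ℝ => c1) S :=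
      integrableOn_const hSfin
    have hIc' : IntegrableOn (fun _ : Fin d → ℝ => c1⁻¹) S :=
      integrableOn_const hSfin
    have hup : orthProb d f0 δ t ≤ c1 * P := by
      rw [horth]
      calc ∫ y in S, f0 y ≤ ∫ _y in S, c1 :=
            setIntegral_mono_on hIf0 hIc hSm fun y hy => (hf y (hSsub hy)).2
        _ = (volume S).toReal * c1 := by rw [setIntegral_const, smul_eq_mul]; rfl
        _ = c1 * P := by rw [hvolS]; ring
    have hlo : c1⁻¹ * P ≤ orthProb d f0 δ t := by
      rw [horth]
      calc c1⁻¹ * P = (volume S).toReal * c1⁻¹ := by rw [hvolS]; ring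
        _ = ∫ _y in S, c1⁻¹ := by rw [setIntegral_const, smul_eq_mul]; rfl
        _ ≤ ∫ y in S, f0 y :=
            setIntegral_mono_on hIc' hIf0 hSm fun y hy => (hf y (hSsub hy)).1
    have hgt := hg t htc
    have hg0nn : 0 ≤ g0 t := le_trans (inv_nonneg.2 hc2.le) hgt.1
    have horthnn : 0 ≤ orthProb d f0 δ t :=
      le_trans (mul_nonneg (inv_nonneg.2 hc1.le) hPnn) hlo
    have hp0up : p0 t ≤ c1 * P * c2 := by
      rw [hp0]
      exact mul_le_mul hup hgt.2 hg0nn (by positivity)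
    have hp0lo : c1⁻¹ * P * c2⁻¹ ≤ p0 t := by
      rw [hp0]
      exact mul_le_mul hlo hgt.1 (inv_nonneg.2 hc2.le) horthnn
    by_cases hcase : σ < p0 t
    · have hPb : b < P := by
        rw [hbdef, div_lt_iff₀ hc12]
        calc σ < p0 t := hcase
          _ ≤ c1 * P * c2 := hp0up
          _ = P * (c1 * c2) := by ring
      have hPpos : 0 < P := lt_trans hb hPb
      have hJfval : Jf d b (ψ t) = P⁻¹ := by
        unfold Jf
        rw [if_pos ⟨hw, hPb⟩]
      rw [hq]
      simp only [if_pos hcase, hJfval]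
      have hlow : 0 < c1⁻¹ * P * c2⁻¹ := by positivity
      have := inv_anti₀ hlow hp0lo
      calc (p0 t)⁻¹ ≤ (c1⁻¹ * P * c2⁻¹)⁻¹ := this
        _ = c1 * c2 * P⁻¹ := by
            rw [mul_inv, mul_inv, inv_inv, inv_inv]; ring
    · rw [hq]
      simp only [if_neg hcase]
      exact mul_nonneg hc12.le (Jf_nonneg d b (ψ t))
  -- integrability
  have hp0m : Measurable p0 := (measurable_orthProb d f0 hf0 δ).mul hg0
  have hqm : Measurable q := by
    have : q = {t | σ < p0 t}.indicator fun t => (p0 t)⁻¹ := by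
      funext t
      simp [hq, Set.indicator_apply]
    rw [this]
    exact Measurable.indicator hp0m.inv (measurableSet_lt measurable_const hp0m)
  have hcubefin : volume cube ≠ ⊤ := by
    rw [hcube, volume_cube]; exact ENNReal.one_ne_top
  have hql : IntegrableOn q cube := by
    refine Measure.integrableOn_of_bounded (M := σ⁻¹) hcubefin
      hqm.aestronglyMeasurable ?_
    refine Filter.Eventually.of_forall fun t => ?_
    rw [hq]
    dsimp only
    split
    · rename_i h
      rw [Real.norm_eq_abs, abs_of_nonneg (inv_nonneg.2 (le_trans hσ.le h.le))]
      exact inv_anti₀ hσ h.le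
    · simp [inv_nonneg.2 hσ.le]
  have hJc : Integrable (fun t => Jf d b (ψ t)) := by
    have := (hψmp.integrable_comp_emb ψe.measurableEmbedding).2 (integrable_Jf d hb)
    exact this
  have hqr : IntegrableOn (fun t => c1 * c2 * Jf d b (ψ t)) cube :=
    ((hJc.const_mul (c1 * c2))).integrableOn
  calc ∫ t in cube, q t ≤ ∫ t in cube, c1 * c2 * Jf d b (ψ t) :=
        setIntegral_mono_on hql hqr hcubem hpt
    _ = c1 * c2 * ∫ t in cube, Jf d b (ψ t) := integral_const_mul _ _
    _ = c1 * c2 * ∫ t, Jf d b (ψ t) := by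
        congr 1
        apply setIntegral_eq_integral_of_forall_compl_eq_zero
        intro t ht
        have hnall : ¬ (∀ j, ψ t j ∈ Set.Icc (0:ℝ) 1) := by
          intro hall
          apply ht
          intro j _
          have hj' := hall j
          by_cases hj : δ j
          · simp only [hψ, if_pos hj] at hj'
            exact hj'
          · simp only [hψ, if_neg hj] at hj'
            constructor
            · linarith [hj'.2]
            · linarith [hj'.1]
        unfold Jf
        rw [if_neg]
        tauto
    _ = c1 * c2 * J d b := by
        rw [J, hψmp.integral_comp ψe.measurableEmbedding (Jf d b)]

end MassQ

/-- With `p0(δ,t) = p(t;δ) g0(t)`, for `0 < σ ≤ c1 c2`,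
`∑_δ ∫_{[0,1]^d} p0(δ,t)⁻¹ 1{p0(δ,t) > σ} dt ≤ (2^d c1 c2 / d!)(log(c1 c2/σ))^d`. -/
theorem mass_of_Q_sigma_bound (d : ℕ) (hd : 1 ≤ d) (c1 c2 : ℝ) (hc1 : 0 < c1)
    (hc2 : 0 < c2) (f0 g0 : (Fin d → ℝ) → ℝ) (hf0 : Measurable f0) (hg0 : Measurable g0)
    (hf : ∀ y ∈ Set.univ.pi fun _ : Fin d => Set.Icc (0:ℝ) 1, c1⁻¹ ≤ f0 y ∧ f0 y ≤ c1)
    (hg : ∀ y ∈ Set.univ.pi fun _ : Fin d => Set.Icc (0:ℝ) 1, c2⁻¹ ≤ g0 y ∧ g0 y ≤ c2)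
    (σ : ℝ) (hσ : 0 < σ) (hσ' : σ ≤ c1 * c2) :
    ∑ δ : Fin d → Bool,
        ∫ t in Set.univ.pi fun _ : Fin d => Set.Icc (0:ℝ) 1,
          (if σ < orthProb d f0 δ t * g0 t then (orthProb d f0 δ t * g0 t)⁻¹ else 0)
      ≤ 2^d * c1 * c2 / (Nat.factorial d) * (Real.log (c1 * c2 / σ))^d := by
  classical
  have hc12 : 0 < c1 * c2 := mul_pos hc1 hc2
  set b : ℝ := σ / (c1 * c2) with hbdef
  have hb : 0 < b := div_pos hσ hc12
  have hb1 : b ≤ 1 := (div_le_one hc12).2 hσ'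
  have hbinv : b⁻¹ = c1 * c2 / σ := by rw [hbdef, inv_div]
  have hL0 : 0 ≤ Real.log b⁻¹ := Real.log_nonneg ((one_le_inv₀ hb).2 hb1)
  have hJ := MassQ.J_le d hb
  rw [max_eq_left hL0] at hJ
  calc ∑ δ : Fin d → Bool,
        ∫ t in Set.univ.pi fun _ : Fin d => Set.Icc (0:ℝ) 1,
          (if σ < orthProb d f0 δ t * g0 t then (orthProb d f0 δ t * g0 t)⁻¹ else 0)
      ≤ ∑ _δ : Fin d → Bool, c1 * c2 * MassQ.J d b :=
        Finset.sum_le_sum fun δ _ =>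
          MassQ.per_delta d c1 c2 hc1 hc2 f0 g0 hf0 hg0 hf hg σ hσ hσ' δ
    _ = 2^d * (c1 * c2 * MassQ.J d b) := by
        rw [Finset.sum_const, Finset.card_univ, Fintype.card_fun]
        simp only [Fintype.card_bool, Fintype.card_fin, nsmul_eq_mul]
        push_cast
        ring
    _ ≤ 2^d * (c1 * c2 * ((Real.log b⁻¹)^d / d.factorial)) := by
        refine mul_le_mul_of_nonneg_left ?_ (by positivity)
        exact mul_le_mul_of_nonneg_left hJ hc12.le
    _ = 2^d * c1 * c2 / (Nat.factorial d) * (Real.log (c1 * c2 / σ))^d := by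
        rw [hbinv]
        ring
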